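/- The set of homotopy classes of continuous maps from the torus T² = S¹ × S¹ to the circle S¹ is in bijection with ℤ × ℤ. -/

import Mathlib

open CategoryTheory

/-- The `n`-sphere: the unit sphere in `EuclideanSpace ℝ (Fin (n+1))`, with the
subspace topology. -/
abbrev Sph (n : ℕ) : Type := Metric.sphere (0 : EuclideanSpace ℝ (Fin (n+1))) 1

/-- A fixed basepoint `pₙ` on the `n`-sphere. -/
noncomputable def pt (n : ℕ) : Sph n :=
  ⟨EuclideanSpace.single 0 1, by simp [EuclideanSpace.norm_single]⟩

/-- `π₀ C(X, Y)`: homotopy classes of continuous maps `X → Y`, i.e. the quotient of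
`C(X, Y)` by the homotopy relation. -/
def HtpyClasses (X Y : Type*) [TopologicalSpace X] [TopologicalSpace Y] : Type _ :=
  Quotient (⟨ContinuousMap.Homotopic, ContinuousMap.Homotopic.equivalence⟩ : Setoid C(X, Y))

/-- The torus `T² = S¹ × S¹`. -/
abbrev Torus : Type := Sph 1 × Sph 1

noncomputable section
open Complex Metric Real Topology

namespace TorusProof

/-- A point of the unit circle other than `-1` lies in the slit plane. -/
lemma mem_slitPlane_of_ne_neg_one {z : Circle} (h : (z : ℂ) ≠ -1) :
    (z : ℂ) ∈ Complex.slitPlane := by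
  rw [Complex.mem_slitPlane_iff]
  by_contra hc
  push_neg at hc
  obtain ⟨h1, h2⟩ := hc
  have habs : ‖(z : ℂ)‖ = 1 := z.norm_coe
  have hz : (z : ℂ) = ((z : ℂ).re : ℂ) := Complex.ext rfl (by simp [h2])
  rw [hz, Complex.norm_real, Real.norm_eq_abs] at habs
  have : (z : ℂ).re = -1 := by
    rcases abs_eq (by norm_num : (0:ℝ) ≤ 1) |>.mp habs with h' | h'
    · linarith
    · exact h'
  exact h (by rw [hz, this]; norm_num)

lemma dist_eq_two_of_neg {a b : Circle} (h : (a : ℂ) = -(b : ℂ)) : dist a b = 2 := by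
  have : dist a b = dist (a : ℂ) (b : ℂ) := rfl
  rw [this, dist_eq_norm, h]
  have : -(b : ℂ) - b = (-2 : ℂ) * b := by ring
  rw [this, norm_mul]
  simp [Circle.norm_coe]

lemma div_mem_slitPlane {a b : Circle} (h : dist a b < 2) :
    ((a / b : Circle) : ℂ) ∈ Complex.slitPlane := by
  apply mem_slitPlane_of_ne_neg_one
  intro hc
  rw [Circle.coe_div, div_eq_iff (Circle.coe_ne_zero b)] at hc
  have : (a : ℂ) = -(b : ℂ) := by rw [hc]; ring
  exact absurd (dist_eq_two_of_neg this) (by linarith)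

lemma exp_arg_div {a b : Circle} (h : dist a b < 2) :
    Circle.exp (Complex.arg ((a : ℂ) / (b : ℂ))) = a / b := by
  rw [← Circle.coe_div]; exact Circle.exp_arg _

lemma continuousAt_arg_div {X : Type*} [TopologicalSpace X] {f g : X → Circle}
    (hf : Continuous f) (hg : Continuous g) {x : X} (h : dist (f x) (g x) < 2) :
    ContinuousAt (fun y => Complex.arg ((f y : ℂ) / (g y : ℂ))) x := by
  have hc : ContinuousAt (fun y => (f y : ℂ) / (g y : ℂ)) x :=
    ((hf.subtype_val.div hg.subtype_val fun y => Circle.coe_ne_zero _)).continuousAt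
  have hs : ((f x : ℂ) / (g x : ℂ)) ∈ Complex.slitPlane := by
    rw [← Circle.coe_div]; exact div_mem_slitPlane h
  exact ContinuousAt.comp (g := Complex.arg) (f := fun y => (f y : ℂ) / (g y : ℂ))
    (Complex.continuousAt_arg hs) hc

lemma exp_sum {α : Type*} (s : Finset α) (f : α → ℝ) :
    Circle.exp (∑ i ∈ s, f i) = ∏ i ∈ s, Circle.exp (f i) := by
  classical
  induction s using Finset.cons_induction with
  | empty => simp
  | cons a s ha ih => rw [Finset.sum_cons, Finset.prod_cons, Circle.exp_add, ih]

lemma exp_int_mul (m : ℤ) (x : ℝ) : Circle.exp ((m : ℝ) * x) = Circle.exp x ^ m := by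
  induction m using Int.induction_on with
  | zero => simp
  | succ k ih =>
      push_cast at ih ⊢
      rw [add_mul, one_mul, Circle.exp_add, ih, ← zpow_add_one]
  | pred k ih =>
      push_cast at ih ⊢
      rw [sub_mul, one_mul, Circle.exp_sub, ih, div_eq_mul_inv, ← zpow_sub_one]

/-- A continuous real function all of whose values are integer multiples of `2π`
is constant on a preconnected space. -/
lemma const_of_int_mul {X : Type*} [TopologicalSpace X] [PreconnectedSpace X]
    {d : X → ℝ} (hd : Continuous d) (h : ∀ x, ∃ m : ℤ, d x = m * (2 * π)) (a b : X) :
    d a = d b := by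
  by_contra hne
  obtain ⟨ma, hma⟩ := h a
  obtain ⟨mb, hmb⟩ := h b
  have hpi : (0:ℝ) < π := Real.pi_pos
  -- the value `ma * (2π) + π` (or minus) is strictly between d a and d b
  rcases lt_or_gt_of_ne hne with hlt | hlt
  · have hm : ma < mb := by
      by_contra hm
      push_neg at hm
      have : (mb:ℝ) ≤ ma := by exact_mod_cast hm
      nlinarith
    have hmem : d a + π ∈ Set.Icc (d a) (d b) := by
      constructor
      · linarith
      · have : (ma:ℝ) + 1 ≤ mb := by exact_mod_cast hm
        nlinarith
    obtain ⟨c, hc⟩ := intermediate_value_univ a b hd hmem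
    obtain ⟨mc, hmc⟩ := h c
    rw [hmc, hma] at hc
    have : (2*mc : ℝ) = 2*ma + 1 := by
      have := hc
      field_simp at this ⊢
      nlinarith
    have : (2*mc : ℤ) = 2*ma + 1 := by exact_mod_cast this
    omega
  · have hm : mb < ma := by
      by_contra hm
      push_neg at hm
      have : (ma:ℝ) ≤ mb := by exact_mod_cast hm
      nlinarith
    have hmem : d a - π ∈ Set.Icc (d b) (d a) := by
      constructor
      · have : (mb:ℝ) + 1 ≤ ma := by exact_mod_cast hm
        nlinarith
      · linarith
    obtain ⟨c, hc⟩ := intermediate_value_univ b a hd hmem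
    obtain ⟨mc, hmc⟩ := h c
    rw [hmc, hma] at hc
    have : (2*mc : ℝ) = 2*ma - 1 := by nlinarith
    have : (2*mc : ℤ) = 2*ma - 1 := by exact_mod_cast this
    omega


/-- Lift of a circle-valued map on a closed ball, by telescoping arguments. -/
lemma lift_on_ball (F : C(ℝ × ℝ, Circle)) (R : ℝ) (hR : 0 < R) :
    ∃ G : ℝ × ℝ → ℝ, ContinuousOn G (closedBall 0 R) ∧
      (∀ u ∈ closedBall (0:ℝ×ℝ) R, Circle.exp (G u) = F u) ∧
      G 0 = Complex.arg ((F 0 : ℂ)) := by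
  have hK : IsCompact (closedBall (0:ℝ×ℝ) R) := isCompact_closedBall _ _
  have hUC := hK.uniformContinuousOn_of_continuous F.continuous.continuousOn
  replace hUC := Metric.uniformContinuousOn_iff.mp hUC
  obtain ⟨δ, hδ, hδ2⟩ := hUC 2 (by norm_num)
  obtain ⟨N, hN⟩ := exists_nat_gt (R / δ)
  have hN0 : 0 < N := by
    have h0 : 0 < R / δ := div_pos hR hδ
    exact_mod_cast h0.trans hN
  have hN0' : (0:ℝ) < N := by exact_mod_cast hN0
  set pnt : ℝ × ℝ → ℕ → ℝ × ℝ := fun u k => ((k : ℝ) / N) • u with hpnt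
  have hmem : ∀ u ∈ closedBall (0:ℝ×ℝ) R, ∀ k, k ≤ N → pnt u k ∈ closedBall (0:ℝ×ℝ) R := by
    intro u hu k hk
    rw [mem_closedBall_zero_iff] at hu ⊢
    rw [hpnt, norm_smul]
    have h1 : ‖(k:ℝ)/N‖ ≤ 1 := by
      rw [Real.norm_eq_abs, _root_.abs_of_nonneg (by positivity)]
      rw [div_le_one hN0']
      exact_mod_cast hk
    calc ‖(k:ℝ)/N‖ * ‖u‖ ≤ 1 * ‖u‖ := by
          exact mul_le_mul_of_nonneg_right h1 (norm_nonneg _)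
      _ = ‖u‖ := one_mul _
      _ ≤ R := hu
  have hdist : ∀ u ∈ closedBall (0:ℝ×ℝ) R, ∀ k : ℕ, dist (pnt u (k+1)) (pnt u k) < δ := by
    intro u hu k
    rw [mem_closedBall_zero_iff] at hu
    rw [hpnt, dist_eq_norm, ← sub_smul, norm_smul]
    have h1 : ‖((k:ℝ)+1)/N - (k:ℝ)/N‖ = 1/N := by
      rw [div_sub_div_same, add_sub_cancel_left, Real.norm_eq_abs, _root_.abs_of_nonneg (by positivity)]
    push_cast
    rw [h1]
    have hRδ : R < N * δ := by
      rw [div_lt_iff₀ hδ] at hN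
      linarith
    calc 1/(N:ℝ) * ‖u‖ ≤ 1/N * R := by
          exact mul_le_mul_of_nonneg_left hu (by positivity)
      _ < δ := by
          rw [div_mul_eq_mul_div, one_mul, div_lt_iff₀ hN0']
          linarith
  have hlt : ∀ u ∈ closedBall (0:ℝ×ℝ) R, ∀ k, k < N →
      dist (F (pnt u (k+1))) (F (pnt u k)) < 2 := by
    intro u hu k hk
    exact hδ2 _ (hmem u hu (k+1) hk) _ (hmem u hu k hk.le) (hdist u hu k)
  refine ⟨fun u => Complex.arg ((F 0 : ℂ)) +
      ∑ k ∈ Finset.range N, Complex.arg ((F (pnt u (k+1)) : ℂ) / (F (pnt u k) : ℂ)),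
      ?_, ?_, ?_⟩
  · apply ContinuousOn.add continuousOn_const
    apply continuousOn_finset_sum
    intro k hk
    intro u hu
    have hf : Continuous fun u : ℝ×ℝ => F (pnt u (k+1)) :=
      F.continuous.comp (f := fun u : ℝ×ℝ => pnt u (k+1)) (by rw [hpnt]; fun_prop)
    have hg : Continuous fun u : ℝ×ℝ => F (pnt u k) :=
      F.continuous.comp (f := fun u : ℝ×ℝ => pnt u k) (by rw [hpnt]; fun_prop)
    exact (continuousAt_arg_div hf hg (hlt u hu k (Finset.mem_range.mp hk))).continuousWithinAt
  · intro u hu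
    rw [Circle.exp_add, exp_sum]
    have hterm : ∀ k ∈ Finset.range N,
        Circle.exp (Complex.arg ((F (pnt u (k+1)) : ℂ) / (F (pnt u k) : ℂ)))
          = F (pnt u (k+1)) / F (pnt u k) := by
      intro k hk
      exact exp_arg_div (hlt u hu k (Finset.mem_range.mp hk))
    rw [Finset.prod_congr rfl hterm, Finset.prod_range_div (fun k => F (pnt u k))]
    have h0 : pnt u 0 = 0 := by rw [hpnt]; simp
    have hn : pnt u N = u := by
      rw [hpnt]; simp only [div_self (ne_of_gt hN0'), one_smul]
    rw [Circle.exp_arg, h0, hn]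
    exact mul_div_cancel _ _
  · have h00 : ∀ k : ℕ, pnt 0 k = 0 := fun k => by rw [hpnt]; simp
    simp [h00, div_self (Circle.coe_ne_zero (F 0)), Complex.arg_one]

/-- Uniqueness of lifts on preconnected sets. -/
lemma lift_unique {s : Set (ℝ × ℝ)} (hs : _root_.IsPreconnected s) {G₁ G₂ : ℝ × ℝ → ℝ}
    (h₁ : ContinuousOn G₁ s) (h₂ : ContinuousOn G₂ s)
    (hexp : ∀ u ∈ s, Circle.exp (G₁ u) = Circle.exp (G₂ u))
    {u₀ : ℝ × ℝ} (h₀ : u₀ ∈ s) (heq : G₁ u₀ = G₂ u₀) {u : ℝ × ℝ} (hu : u ∈ s) :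
    G₁ u = G₂ u := by
  haveI : PreconnectedSpace s := Subtype.preconnectedSpace hs
  set d : s → ℝ := fun x => G₁ x - G₂ x with hd
  have hdc : Continuous d := (h₁.restrict.sub h₂.restrict)
  have hint : ∀ x : s, ∃ m : ℤ, d x = m * (2 * π) := by
    intro x
    have := hexp x x.2
    rw [Circle.exp_eq_exp] at this
    obtain ⟨m, hm⟩ := this
    exact ⟨m, by rw [hd]; simp only; linarith [hm]⟩
  have := const_of_int_mul hdc hint ⟨u, hu⟩ ⟨u₀, h₀⟩
  simp only [hd] at this
  linarith [this]

/-- Every continuous map `ℝ² → S¹` lifts globally to `ℝ`. -/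
theorem exists_global_lift (F : C(ℝ × ℝ, Circle)) :
    ∃ G : ℝ × ℝ → ℝ, Continuous G ∧ ∀ u, Circle.exp (G u) = F u := by
  have H : ∀ R : ℝ, ∃ G, ContinuousOn G (closedBall 0 (max R 1)) ∧
      (∀ u ∈ closedBall (0:ℝ×ℝ) (max R 1), Circle.exp (G u) = F u) ∧
      G 0 = Complex.arg ((F 0 : ℂ)) :=
    fun R => lift_on_ball F _ (lt_of_lt_of_le one_pos (le_max_right _ _))
  choose L hc he h0 using H
  have key : ∀ R R' : ℝ, ∀ u, u ∈ closedBall (0:ℝ×ℝ) (max R 1) →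
      u ∈ closedBall (0:ℝ×ℝ) (max R' 1) → L R u = L R' u := by
    intro R R' u hu hu'
    set r := min (max R 1) (max R' 1) with hr
    have hsub : closedBall (0:ℝ×ℝ) r ⊆ closedBall 0 (max R 1) :=
      closedBall_subset_closedBall (min_le_left _ _)
    have hsub' : closedBall (0:ℝ×ℝ) r ⊆ closedBall 0 (max R' 1) :=
      closedBall_subset_closedBall (min_le_right _ _)
    have hpre : _root_.IsPreconnected (closedBall (0:ℝ×ℝ) r) := (convex_closedBall _ _).isPreconnected
    have h0m : (0:ℝ×ℝ) ∈ closedBall (0:ℝ×ℝ) r :=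
      mem_closedBall_self (le_min (le_trans zero_le_one (le_max_right _ _))
        (le_trans zero_le_one (le_max_right _ _)))
    have hum : u ∈ closedBall (0:ℝ×ℝ) r := by
      rw [mem_closedBall_zero_iff] at hu hu' ⊢
      exact le_min hu hu'
    exact lift_unique hpre ((hc R).mono hsub) ((hc R').mono hsub')
      (fun v hv => by rw [he R v (hsub hv), he R' v (hsub' hv)]) h0m
      (by rw [h0, h0]) hum
  refine ⟨fun u => L ‖u‖ u, ?_, ?_⟩
  · rw [continuous_iff_continuousAt]
    intro u₀
    set R₀ := ‖u₀‖ + 1 with hR₀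
    have hmem : closedBall (0:ℝ×ℝ) (max R₀ 1) ∈ nhds u₀ := by
      apply Filter.mem_of_superset (Metric.isOpen_ball.mem_nhds (x := u₀)
        (by rw [mem_ball_zero_iff]; calc ‖u₀‖ < R₀ := by rw [hR₀]; linarith
              _ ≤ max R₀ 1 := le_max_left _ _))
      exact ball_subset_closedBall
    have hCA : ContinuousAt (L R₀) u₀ := (hc R₀).continuousAt hmem
    apply hCA.congr
    apply Filter.eventuallyEq_of_mem (ball_mem_nhds u₀ one_pos)
    intro u hu
    have h1 : u ∈ closedBall (0:ℝ×ℝ) (max ‖u‖ 1) := by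
      rw [mem_closedBall_zero_iff]; exact le_max_left _ _
    have h2 : u ∈ closedBall (0:ℝ×ℝ) (max R₀ 1) := by
      rw [mem_closedBall_zero_iff]
      have : dist u u₀ < 1 := mem_ball.mp hu
      calc ‖u‖ = ‖u₀ + (u - u₀)‖ := by ring_nf
        _ ≤ ‖u₀‖ + ‖u - u₀‖ := norm_add_le _ _
        _ ≤ R₀ := by rw [hR₀]; have := dist_eq_norm u u₀ ▸ this; linarith
        _ ≤ max R₀ 1 := le_max_left _ _
    exact (key ‖u‖ R₀ u h1 h2).symm
  · intro u
    exact he ‖u‖ u (by rw [mem_closedBall_zero_iff]; exact le_max_left _ _)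

/-- A lift of a periodic map changes by a fixed multiple of `2π` under translation. -/
lemma exists_period {G : ℝ × ℝ → ℝ} (hG : Continuous G) (e : ℝ × ℝ)
    (h : ∀ u, Circle.exp (G (u + e)) = Circle.exp (G u)) :
    ∃ m : ℤ, ∀ u, G (u + e) = G u + m * (2 * π) := by
  have hd : Continuous fun u => G (u + e) - G u :=
    (hG.comp (continuous_id.add continuous_const)).sub hG
  have hint : ∀ u, ∃ m : ℤ, G (u + e) - G u = m * (2 * π) := by
    intro u
    have := h u
    rw [Circle.exp_eq_exp] at this
    obtain ⟨m, hm⟩ := this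
    exact ⟨m, by linarith⟩
  obtain ⟨m, hm⟩ := hint 0
  refine ⟨m, fun u => ?_⟩
  have := const_of_int_mul hd hint u 0
  rw [hm] at this
  linarith

lemma iterate_period {G : ℝ × ℝ → ℝ} {e : ℝ × ℝ} {c : ℝ}
    (h : ∀ u, G (u + e) = G u + c) :
    ∀ (a : ℤ) (u : ℝ × ℝ), G (u + (a : ℝ) • e) = G u + a * c := by
  intro a
  induction a using Int.induction_on with
  | zero => simp
  | succ k ih =>
      intro u
      have harg : u + (((k:ℤ)+1 : ℤ) : ℝ) • e = (u + ((k:ℤ) : ℝ) • e) + e := by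
        push_cast
        rw [add_smul, one_smul, add_assoc]
      push_cast at harg ih ⊢
      rw [harg, h, ih]
      ring
  | pred k ih =>
      intro u
      have harg : u + ((-(k:ℤ)-1 : ℤ) : ℝ) • e = (u + ((-(k:ℤ) : ℤ) : ℝ) • e) - e := by
        push_cast
        rw [sub_smul, one_smul, ← add_sub_assoc]
      have h' : ∀ v : ℝ × ℝ, G (v - e) = G v - c := by
        intro v
        have := h (v - e)
        simp only [sub_add_cancel] at this
        linarith
      push_cast at harg ih ⊢
      rw [harg, h', ih]
      ring

/-- The basic family of maps `T² → S¹`. -/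
def Emap (m n : ℤ) : C(Circle × Circle, Circle) :=
  ⟨fun z => z.1 ^ m * z.2 ^ n,
    ((continuous_zpow m).comp continuous_fst).mul ((continuous_zpow n).comp continuous_snd)⟩

lemma Emap_apply (m n : ℤ) (z : Circle × Circle) : Emap m n z = z.1 ^ m * z.2 ^ n := rfl

/-- If a slice of a lift satisfies `exp (G (t, x)) = exp (m x)` then `G (t, ·)` has
period increment `m * 2π`. -/
lemma slice_deg {G : ℝ × ℝ → ℝ} (hc : Continuous G) (t : ℝ) (m : ℤ)
    (h : ∀ x, Circle.exp (G (t, x)) = Circle.exp ((m : ℝ) * x)) (x : ℝ) :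
    G (t, x + 2 * π) = G (t, x) + (m : ℝ) * (2 * π) := by
  set d : ℝ → ℝ := fun x => G (t, x) - m * x with hd
  have hdc : Continuous d := (hc.comp (continuous_const.prodMk continuous_id)).sub
    (continuous_const.mul continuous_id)
  have hint : ∀ x, ∃ j : ℤ, d x = j * (2 * π) := by
    intro x
    have := h x
    rw [Circle.exp_eq_exp] at this
    obtain ⟨j, hj⟩ := this
    exact ⟨j, by rw [hd]; simp only; linarith⟩
  have := const_of_int_mul hdc hint (x + 2 * π) x
  simp only [hd] at this
  nlinarith [this]

lemma deg_eq_of_homotopy {L : C(ℝ × ℝ, Circle)} (m m' : ℤ)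
    (hper : ∀ u : ℝ × ℝ, L (u + (0, 2 * π)) = L u)
    (h0 : ∀ x, L (0, x) = Circle.exp ((m : ℝ) * x))
    (h1 : ∀ x, L (1, x) = Circle.exp ((m' : ℝ) * x)) : m = m' := by
  obtain ⟨G, hGc, hG⟩ := exists_global_lift L
  obtain ⟨k, hk⟩ := exists_period hGc (0, 2 * π) (fun u => by rw [hG, hG, hper])
  have e0 : ∀ x : ℝ, ((0, x) : ℝ × ℝ) + (0, 2 * π) = (0, x + 2 * π) := by
    intro x; simp [Prod.ext_iff]
  have e1 : ∀ x : ℝ, ((1, x) : ℝ × ℝ) + (0, 2 * π) = (1, x + 2 * π) := by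
    intro x; simp [Prod.ext_iff]
  have hm : G (0, (0:ℝ) + 2 * π) = G (0, 0) + (m : ℝ) * (2 * π) :=
    slice_deg hGc 0 m (fun x => by rw [hG, h0]) 0
  have hm' : G (1, (0:ℝ) + 2 * π) = G (1, 0) + (m' : ℝ) * (2 * π) :=
    slice_deg hGc 1 m' (fun x => by rw [hG, h1]) 0
  have hk0 := hk (0, 0)
  rw [e0 0] at hk0
  have hk1 := hk (1, 0)
  rw [e1 0] at hk1
  have hpi := Real.pi_pos
  have hkm : (k : ℝ) = m := by
    have : (k : ℝ) * (2 * π) = (m : ℝ) * (2 * π) := by linarith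
    exact mul_right_cancel₀ (by positivity) this
  have hkm' : (k : ℝ) = m' := by
    have : (k : ℝ) * (2 * π) = (m' : ℝ) * (2 * π) := by linarith
    exact mul_right_cancel₀ (by positivity) this
  have : (m : ℝ) = m' := by rw [← hkm, hkm']
  exact_mod_cast this

/-- Injectivity: homotopic basic maps have equal degrees. -/
theorem emap_inj {m n m' n' : ℤ} (h : (Emap m n).Homotopic (Emap m' n')) :
    m = m' ∧ n = n' := by
  obtain ⟨H⟩ := h
  have hproj0 : Set.projIcc (0:ℝ) 1 zero_le_one 0 = 0 := Set.projIcc_left zero_le_one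
  have hproj1 : Set.projIcc (0:ℝ) 1 zero_le_one 1 = 1 := Set.projIcc_right zero_le_one
  constructor
  · set L : C(ℝ × ℝ, Circle) :=
      ⟨fun u => H (Set.projIcc 0 1 zero_le_one u.1, (Circle.exp u.2, 1)),
        H.continuous.comp ((continuous_projIcc.comp continuous_fst).prodMk
          ((Circle.exp.continuous.comp continuous_snd).prodMk continuous_const))⟩ with hL
    refine deg_eq_of_homotopy (L := L) m m' ?_ ?_ ?_
    · intro u
      simp only [hL, ContinuousMap.coe_mk]
      have ha : (u + ((0 : ℝ), 2 * π)).1 = u.1 := by simp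
      have hb : Circle.exp ((u + ((0 : ℝ), 2 * π)).2) = Circle.exp u.2 := by
        rw [Prod.snd_add]; exact Circle.periodic_exp u.2
      rw [ha, hb]
    · intro x
      simp only [hL, ContinuousMap.coe_mk, hproj0, H.apply_zero]
      rw [Emap_apply, exp_int_mul]
      simp
    · intro x
      simp only [hL, ContinuousMap.coe_mk, hproj1, H.apply_one]
      rw [Emap_apply, exp_int_mul]
      simp
  · set L : C(ℝ × ℝ, Circle) :=
      ⟨fun u => H (Set.projIcc 0 1 zero_le_one u.1, (1, Circle.exp u.2)),
        H.continuous.comp ((continuous_projIcc.comp continuous_fst).prodMk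
          (continuous_const.prodMk (Circle.exp.continuous.comp continuous_snd)))⟩ with hL
    refine deg_eq_of_homotopy (L := L) n n' ?_ ?_ ?_
    · intro u
      simp only [hL, ContinuousMap.coe_mk]
      have ha : (u + ((0 : ℝ), 2 * π)).1 = u.1 := by simp
      have hb : Circle.exp ((u + ((0 : ℝ), 2 * π)).2) = Circle.exp u.2 := by
        rw [Prod.snd_add]; exact Circle.periodic_exp u.2
      rw [ha, hb]
    · intro x
      simp only [hL, ContinuousMap.coe_mk, hproj0, H.apply_zero]
      rw [Emap_apply, exp_int_mul]
      simp
    · intro x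
      simp only [hL, ContinuousMap.coe_mk, hproj1, H.apply_one]
      rw [Emap_apply, exp_int_mul]
      simp

open unitInterval in
/-- Surjectivity: every map `T² → S¹` is homotopic to a basic map. -/
theorem exists_homotopic_emap (f : C(Circle × Circle, Circle)) :
    ∃ m n : ℤ, f.Homotopic (Emap m n) := by
  set F : C(ℝ × ℝ, Circle) :=
    ⟨fun u => f (Circle.exp u.1, Circle.exp u.2),
      f.continuous.comp ((Circle.exp.continuous.comp continuous_fst).prodMk
        (Circle.exp.continuous.comp continuous_snd))⟩ with hF
  obtain ⟨G, hGc, hG⟩ := exists_global_lift F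
  have hp1 : ∀ u : ℝ × ℝ, Circle.exp (G (u + (2 * π, 0))) = Circle.exp (G u) := by
    intro u
    rw [hG, hG]
    show f _ = f _
    apply congrArg
    rw [Prod.fst_add, Prod.snd_add, Prod.ext_iff]
    exact ⟨Circle.periodic_exp u.1, by norm_num⟩
  have hp2 : ∀ u : ℝ × ℝ, Circle.exp (G (u + (0, 2 * π))) = Circle.exp (G u) := by
    intro u
    rw [hG, hG]
    show f _ = f _
    apply congrArg
    rw [Prod.fst_add, Prod.snd_add, Prod.ext_iff]
    exact ⟨by norm_num, Circle.periodic_exp u.2⟩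
  obtain ⟨m, hm⟩ := exists_period hGc (2 * π, 0) hp1
  obtain ⟨n, hn⟩ := exists_period hGc (0, 2 * π) hp2
  -- combined translation formula
  have key : ∀ (a b : ℤ) (u : ℝ × ℝ),
      G (u.1 + (a : ℝ) * (2 * π), u.2 + (b : ℝ) * (2 * π)) =
        G u + ((a : ℝ) * m + (b : ℝ) * n) * (2 * π) := by
    intro a b u
    have s1 := iterate_period hm a u
    have s2 := iterate_period hn b (u + (a : ℝ) • ((2 * π, 0) : ℝ × ℝ))
    have hco : (u + (a : ℝ) • ((2 * π, 0) : ℝ × ℝ)) + (b : ℝ) • ((0, 2 * π) : ℝ × ℝ) =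
        (u.1 + (a : ℝ) * (2 * π), u.2 + (b : ℝ) * (2 * π)) := by
      rw [Prod.ext_iff]
      constructor <;> simp [smul_eq_mul]
    rw [hco] at s2
    rw [s2, s1]
    ring
  -- the interpolation function upstairs
  set Φ : ℝ → ℝ × ℝ → ℝ :=
    fun t u => (1 - t) * G u + t * ((m : ℝ) * u.1 + (n : ℝ) * u.2) with hΦdef
  have hcomp : ∀ (t : ℝ) (u v : ℝ × ℝ), Circle.exp v.1 = Circle.exp u.1 →
      Circle.exp v.2 = Circle.exp u.2 → Circle.exp (Φ t v) = Circle.exp (Φ t u) := by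
    intro t u v h1 h2
    rw [Circle.exp_eq_exp] at h1 h2
    obtain ⟨a, ha⟩ := h1
    obtain ⟨b, hb⟩ := h2
    have hv : v = (u.1 + (a : ℝ) * (2 * π), u.2 + (b : ℝ) * (2 * π)) := by
      rw [Prod.ext_iff]; exact ⟨ha, hb⟩
    have hGv : G v = G u + ((a : ℝ) * m + (b : ℝ) * n) * (2 * π) := by
      rw [hv]; exact key a b u
    rw [Circle.exp_eq_exp]
    refine ⟨a * m + b * n, ?_⟩
    rw [hΦdef]
    simp only
    rw [hGv, hv]
    push_cast
    ring
  -- the homotopy downstairs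
  set D : I × (Circle × Circle) → Circle :=
    fun p => Circle.exp (Φ (p.1 : ℝ) (Complex.arg (p.2.1 : ℂ), Complex.arg (p.2.2 : ℂ)))
    with hD
  have hDQ : ∀ (t : I) (u : ℝ × ℝ),
      D (t, (Circle.exp u.1, Circle.exp u.2)) = Circle.exp (Φ (t : ℝ) u) := by
    intro t u
    rw [hD]
    exact hcomp t u _ (Circle.exp_arg _) (Circle.exp_arg _)
  have hexpOpen : IsOpenMap Circle.exp := isLocalHomeomorph_circleExp.isOpenMap
  set Q : (I × (ℝ × ℝ)) → I × (Circle × Circle) :=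
    fun p => (p.1, (Circle.exp p.2.1, Circle.exp p.2.2)) with hQ
  have hQuot : IsQuotientMap Q := by
    apply IsOpenMap.isQuotientMap
    · exact IsOpenMap.id.prodMap (hexpOpen.prodMap hexpOpen)
    · exact continuous_fst.prodMk
        ((Circle.exp.continuous.comp (continuous_fst.comp continuous_snd)).prodMk
          (Circle.exp.continuous.comp (continuous_snd.comp continuous_snd)))
    · rintro ⟨t, z⟩
      exact ⟨(t, (Complex.arg (z.1 : ℂ), Complex.arg (z.2 : ℂ))), by
        rw [hQ]; simp [Circle.exp_arg, Prod.ext_iff]⟩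
  have hΦc : Continuous fun p : I × (ℝ × ℝ) => Φ (p.1 : ℝ) p.2 := by
    rw [hΦdef]
    apply Continuous.add
    · exact (continuous_const.sub (continuous_subtype_val.comp continuous_fst)).mul
        (hGc.comp continuous_snd)
    · exact (continuous_subtype_val.comp continuous_fst).mul
        ((continuous_const.mul (continuous_fst.comp continuous_snd)).add
          (continuous_const.mul (continuous_snd.comp continuous_snd)))
  have hDcont : Continuous D := by
    rw [hQuot.continuous_iff]
    have : D ∘ Q = fun p : I × (ℝ × ℝ) => Circle.exp (Φ (p.1 : ℝ) p.2) :=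
      funext fun p => hDQ p.1 p.2
    rw [this]
    exact Circle.exp.continuous.comp hΦc
  refine ⟨m, n, ⟨⟨⟨D, hDcont⟩, ?_, ?_⟩⟩⟩
  · intro z
    show Circle.exp (Φ ((0 : I) : ℝ) _) = f z
    have h0 : ((0 : I) : ℝ) = 0 := rfl
    rw [h0, hΦdef]
    simp only [sub_zero, one_mul, zero_mul, add_zero]
    rw [hG]
    show f (Circle.exp (Complex.arg (z.1 : ℂ)), Circle.exp (Complex.arg (z.2 : ℂ))) = f z
    rw [Circle.exp_arg, Circle.exp_arg]
  · intro z
    show Circle.exp (Φ ((1 : I) : ℝ) _) = Emap m n z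
    have h1 : ((1 : I) : ℝ) = 1 := rfl
    rw [h1, hΦdef]
    simp only [sub_self, zero_mul, one_mul, zero_add]
    rw [Circle.exp_add, exp_int_mul, exp_int_mul, Circle.exp_arg, Circle.exp_arg,
      Emap_apply]

/-! ### Glue: homotopy classes, homeomorphisms, final assembly -/

def htpySetoid (X Y : Type*) [TopologicalSpace X] [TopologicalSpace Y] : Setoid C(X, Y) :=
  ⟨ContinuousMap.Homotopic, ContinuousMap.Homotopic.equivalence⟩

/-- Homotopy classes are invariant under homeomorphisms of both source and target. -/
def congrEquiv {X X' Y Y' : Type*} [TopologicalSpace X] [TopologicalSpace X']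
    [TopologicalSpace Y] [TopologicalSpace Y'] (eX : X ≃ₜ X') (eY : Y ≃ₜ Y') :
    Quotient (htpySetoid X Y) ≃ Quotient (htpySetoid X' Y') where
  toFun := Quotient.map (fun f => ((eY : C(Y, Y')).comp f).comp (eX.symm : C(X', X)))
    (fun f g h => ((ContinuousMap.Homotopic.refl _).comp h).comp
      (ContinuousMap.Homotopic.refl _))
  invFun := Quotient.map (fun f => ((eY.symm : C(Y', Y)).comp f).comp (eX : C(X, X')))
    (fun f g h => ((ContinuousMap.Homotopic.refl _).comp h).comp
      (ContinuousMap.Homotopic.refl _))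
  left_inv := by
    intro q
    induction q using Quotient.inductionOn with
    | h f =>
      apply congrArg (Quotient.mk _)
      ext x
      simp
  right_inv := by
    intro q
    induction q using Quotient.inductionOn with
    | h f =>
      apply congrArg (Quotient.mk _)
      ext x
      simp

/-- The equivalence classifying maps of the torus into the circle. -/
def classEquiv : ℤ × ℤ ≃ Quotient (htpySetoid (Circle × Circle) Circle) := by
  apply Equiv.ofBijective (fun mn : ℤ × ℤ => Quotient.mk _ (Emap mn.1 mn.2))
  constructor
  · intro a b h
    rw [Quotient.eq] at h
    obtain ⟨h1, h2⟩ := emap_inj h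
    exact Prod.ext h1 h2
  · intro q
    induction q using Quotient.inductionOn with
    | h f =>
      obtain ⟨m, n, h⟩ := exists_homotopic_emap f
      exact ⟨(m, n), Quotient.sound h.symm⟩

end TorusProof

namespace TorusProof

/-- The 1-sphere in `EuclideanSpace ℝ (Fin 2)` is homeomorphic to the complex unit circle. -/
def circleHomeo : (Metric.sphere (0 : EuclideanSpace ℝ (Fin 2)) 1) ≃ₜ Circle where
  toFun x := ⟨Complex.orthonormalBasisOneI.repr.symm (x : EuclideanSpace ℝ (Fin 2)), by
    show _ ∈ Metric.sphere (0 : ℂ) 1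
    rw [mem_sphere_zero_iff_norm, LinearIsometryEquiv.norm_map]
    exact mem_sphere_zero_iff_norm.1 x.2⟩
  invFun z := ⟨Complex.orthonormalBasisOneI.repr (z : ℂ), by
    rw [mem_sphere_zero_iff_norm, LinearIsometryEquiv.norm_map]
    exact mem_sphere_zero_iff_norm.1 z.2⟩
  left_inv x := by
    apply Subtype.ext
    exact Complex.orthonormalBasisOneI.repr.apply_symm_apply _
  right_inv z := by
    apply Subtype.ext
    exact Complex.orthonormalBasisOneI.repr.symm_apply_apply _
  continuous_toFun := Continuous.subtype_mk
    (Complex.orthonormalBasisOneI.repr.symm.continuous.comp continuous_subtype_val)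
    (fun x => by
      show _ ∈ Metric.sphere (0 : ℂ) 1
      rw [mem_sphere_zero_iff_norm, Function.comp_apply, LinearIsometryEquiv.norm_map]
      exact mem_sphere_zero_iff_norm.1 x.2)
  continuous_invFun := Continuous.subtype_mk
    (Complex.orthonormalBasisOneI.repr.continuous.comp continuous_subtype_val)
    (fun z => by
      rw [mem_sphere_zero_iff_norm, Function.comp_apply, LinearIsometryEquiv.norm_map]
      exact mem_sphere_zero_iff_norm.1 z.2)

end TorusProof


/-- The set of homotopy classes of continuous maps from the torus
`T² = S¹ × S¹` to the circle `S¹` is in bijection with `ℤ × ℤ`. -/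
theorem homotopy_classes_torus_to_circle_equiv_int_prod_int :
    Nonempty (HtpyClasses Torus (Sph 1) ≃ ℤ × ℤ) := by
  refine ⟨?_⟩
  have e1 : Quotient (TorusProof.htpySetoid Torus (Sph 1)) ≃
      Quotient (TorusProof.htpySetoid (Circle × Circle) Circle) :=
    TorusProof.congrEquiv (TorusProof.circleHomeo.prodCongr TorusProof.circleHomeo)
      TorusProof.circleHomeo
  exact e1.trans TorusProof.classEquiv.symm
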